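/- (Dual orthogonality relation) With D, k_j = 2j+1, θ_n = 3 − 6n(n+1)/(D(D+2)), and u_j(θ_n) = ₄F₃[−j, j+1, −n, n+1; 1, D+2, −D; 1], for all 0 ≤ n, m ≤ D: Σ_{j=0}^D k_j u_j(θ_n) u_j(θ_m) = (D+1)² k_n^{−1} δ_{n,m}. -/

import Mathlib

set_option maxHeartbeats 1000000

/-- Pochhammer symbol `(a)_n = a(a+1)⋯(a+n-1)`. -/
noncomputable def poch (a : ℝ) (n : ℕ) : ℝ := ∏ k ∈ Finset.range n, (a + k)

/-- The terminating hypergeometric sum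
`₄F₃[−i, i+1, −j, j+1; 1, D+2, −D; 1] = Σ_{n=0}^{min(i,j)} …`. -/
noncomputable def F4 (D i j : ℕ) : ℝ :=
  ∑ n ∈ Finset.range (min i j + 1),
    (poch (-(i : ℝ)) n * poch ((i : ℝ) + 1) n * poch (-(j : ℝ)) n * poch ((j : ℝ) + 1) n) /
      (poch 1 n * poch ((D : ℝ) + 2) n * poch (-(D : ℝ)) n * (n.factorial : ℝ))

lemma poch_zero (a : ℝ) : poch a 0 = 1 := by simp [poch]

lemma poch_succ (a : ℝ) (n : ℕ) : poch a (n+1) = poch a n * (a + n) := by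
  simp [poch, Finset.prod_range_succ]

lemma poch_succ' (a : ℝ) (n : ℕ) : poch a (n+1) = a * poch (a+1) n := by
  induction n with
  | zero => simp [poch]
  | succ m ih =>
      rw [poch_succ, ih, poch_succ]
      push_cast
      ring

lemma poch_shift (a : ℝ) (m : ℕ) : a * poch (a+1) m = poch a m * (a + m) := by
  rw [← poch_succ', poch_succ]

lemma poch_neg_nat_eq_zero (n t : ℕ) (h : n < t) : poch (-(n:ℝ)) t = 0 := by
  apply Finset.prod_eq_zero (i := n)
  · exact Finset.mem_range.2 h
  · simp

lemma poch_pos (a : ℝ) (ha : 0 < a) (t : ℕ) : 0 < poch a t := by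
  apply Finset.prod_pos; intro k _; positivity

lemma poch_neg_nat_ne_zero (D t : ℕ) (h : t ≤ D) : poch (-(D:ℝ)) t ≠ 0 := by
  apply Finset.prod_ne_zero_iff.2
  intro k hk
  have hk' : k < D := lt_of_lt_of_le (Finset.mem_range.1 hk) h
  have : (k:ℝ) < (D:ℝ) := by exact_mod_cast hk'
  intro hc; nlinarith

noncomputable def trm (D i n t : ℕ) : ℝ :=
  (poch (-(i : ℝ)) t * poch ((i : ℝ) + 1) t * poch (-(n : ℝ)) t * poch ((n : ℝ) + 1) t) /
    (poch 1 t * poch ((D : ℝ) + 2) t * poch (-(D : ℝ)) t * (t.factorial : ℝ))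

noncomputable def bb (D j : ℕ) : ℝ :=
  3*((j:ℝ)+1)*((D:ℝ)+2+j)*((D:ℝ)-j)/((D:ℝ)*((D:ℝ)+2)*(2*(j:ℝ)+1))
noncomputable def cc (D j : ℕ) : ℝ :=
  3*(j:ℝ)*((D:ℝ)+1+j)*((D:ℝ)+1-j)/((D:ℝ)*((D:ℝ)+2)*(2*(j:ℝ)+1))
noncomputable def aa (D j : ℕ) : ℝ := 3*(j:ℝ)*((j:ℝ)+1)/((D:ℝ)*((D:ℝ)+2))
noncomputable def tht (D n : ℕ) : ℝ := 3 - 6*(n:ℝ)*((n:ℝ)+1)/((D:ℝ)*((D:ℝ)+2))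

noncomputable def gg (D j n : ℕ) : ℕ → ℝ
  | 0 => 0
  | (s+1) => (-6/((D:ℝ)*((D:ℝ)+2))) *
      (poch (-(j:ℝ)) s * poch ((j:ℝ)+1) s * poch (-(n:ℝ)) (s+1) * poch ((n:ℝ)+1) (s+1)) /
      (poch 1 s * poch ((D:ℝ)+2) s * poch (-(D:ℝ)) s * (s.factorial : ℝ))


lemma scalar_id (D j n s : ℕ) :
    (3*((j:ℝ))*(((D:ℝ))+1+((j:ℝ)))*(((D:ℝ))+1-((j:ℝ)))*(((D:ℝ))*(((D:ℝ))+2))*(((j:ℝ))+1)*((j:ℝ))*(-((j:ℝ))+((s:ℝ)))*(-((j:ℝ))+((s:ℝ))+1)) + ((3*((j:ℝ))*(((j:ℝ))+1) - 3*(((D:ℝ))*(((D:ℝ))+2)) + 6*((n:ℝ))*(((n:ℝ))+1))*(-((j:ℝ))+((s:ℝ)))*(((j:ℝ))+1+((s:ℝ)))*(-((j:ℝ)))*(((j:ℝ))+1)*(((D:ℝ))*(((D:ℝ))+2))*(2*((j:ℝ))+1)) + (3*(((j:ℝ))+1)*(((D:ℝ))+2+((j:ℝ)))*(((D:ℝ))-((j:ℝ)))*(-((j:ℝ))-1)*(((j:ℝ))+1+((s:ℝ)))*(((j:ℝ))+2+((s:ℝ)))*(-((j:ℝ)))*(((D:ℝ))*(((D:ℝ))+2)))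 = ((-6)*(-((j:ℝ))+((s:ℝ)))*(((j:ℝ))+1+((s:ℝ)))*(-((n:ℝ))+((s:ℝ))+1)*(((n:ℝ))+2+((s:ℝ)))*(-((j:ℝ)))*(((j:ℝ))+1)*(((D:ℝ))*(((D:ℝ))+2))*(2*((j:ℝ))+1)) - ((-6)*(-((j:ℝ)))*(((j:ℝ))+1)*((1+((s:ℝ)))*((((D:ℝ))+2)+((s:ℝ)))*(-((D:ℝ))+((s:ℝ)))*(((s:ℝ))+1))*(((D:ℝ))*(((D:ℝ))+2))*(2*((j:ℝ))+1)) := by ring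

lemma summand (D j n : ℕ) (hD : 0 < D) (hj1 : 1 ≤ j) (hj : j ≤ D) (hn : n ≤ D)
    (t : ℕ) (ht : t ≤ D) :
    cc D j * trm D (j-1) n t + (aa D j - tht D n) * trm D j n t + bb D j * trm D (j+1) n t
      = gg D j n (t+1) - gg D j n t := by
  have hDR : (0:ℝ) < (D:ℝ) := by exact_mod_cast hD
  have hjR : (1:ℝ) ≤ (j:ℝ) := by exact_mod_cast hj1
  have hjne : (j:ℝ) ≠ 0 := by linarith
  have hj1ne : (j:ℝ) + 1 ≠ 0 := by linarith
  have h2j : 2*(j:ℝ)+1 ≠ 0 := by linarith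
  have hDne : (D:ℝ) ≠ 0 := ne_of_gt hDR
  have hD2 : (D:ℝ) + 2 ≠ 0 := by linarith
  have hcast : ((j-1 : ℕ) : ℝ) = (j:ℝ) - 1 := by
    have := Nat.cast_sub hj1 (R := ℝ); simpa using this
  match t with
  | 0 =>
    simp only [trm, gg, poch_zero, poch_succ, Nat.factorial_zero]
    rw [tht, aa, bb, cc]
    push_cast
    field_simp
    ring
  | (s+1) =>
    have hsD : s < D := by omega
    have hsDR : (s:ℝ) < (D:ℝ) := by exact_mod_cast hsD
    have hq1 : poch 1 s ≠ 0 := ne_of_gt (poch_pos 1 one_pos s)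
    have hq2 : poch ((D:ℝ)+2) s ≠ 0 := ne_of_gt (poch_pos _ (by linarith) s)
    have hq3 : poch (-(D:ℝ)) s ≠ 0 := poch_neg_nat_ne_zero D s (le_of_lt hsD)
    have hff : (s.factorial : ℝ) ≠ 0 := by exact_mod_cast s.factorial_ne_zero
    have hs1 : (s:ℝ) + 1 ≠ 0 := by positivity
    have hDs : (D:ℝ) + 2 + s ≠ 0 := by positivity
    have hsD2 : -(D:ℝ) + s ≠ 0 := by intro h; nlinarith
    have e1 : poch (-(j:ℝ)+1) (s+1)
        = poch (-(j:ℝ)) s * (-(j:ℝ)+s) * (-(j:ℝ)+s+1) / (-(j:ℝ)) := by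
      rw [eq_div_iff (by simpa using hjne)]
      have h := poch_shift (-(j:ℝ)) (s+1)
      rw [poch_succ (-(j:ℝ)) s] at h
      push_cast at h
      linear_combination h
    have e2 : poch ((j:ℝ)+2) (s+1)
        = poch ((j:ℝ)+1) s * ((j:ℝ)+1+s) * ((j:ℝ)+2+s) / ((j:ℝ)+1) := by
      rw [eq_div_iff hj1ne]
      have h := poch_shift ((j:ℝ)+1) (s+1)
      have h22 : (j:ℝ)+1+1 = (j:ℝ)+2 := by ring
      rw [h22, poch_succ ((j:ℝ)+1) s] at h
      push_cast at h
      linear_combination h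
    have e3 : poch ((j:ℝ)) (s+1) = (j:ℝ) * poch ((j:ℝ)+1) s := by
      have := poch_succ' ((j:ℝ)) s; simpa using this
    have e4 : poch (-(j:ℝ)-1) (s+1) = (-(j:ℝ)-1) * poch (-(j:ℝ)) s := by
      have := poch_succ' (-(j:ℝ)-1) s
      have h22 : -(j:ℝ)-1+1 = -(j:ℝ) := by ring
      rw [h22] at this
      exact this
    have es8 : (((s+1).factorial : ℕ) : ℝ) = (s.factorial : ℝ) * ((s:ℝ)+1) := by
      rw [Nat.factorial_succ]; push_cast; ring
    have hT1 : cc D j * trm D (j-1) n (s+1) = ((poch (-(j:ℝ)) s * poch ((j:ℝ)+1) s * poch (-(n:ℝ)) s * poch ((n:ℝ)+1) s * (-((n:ℝ))+((s:ℝ))) * (((n:ℝ))+1+((s:ℝ)))) / (poch 1 s * poch ((D:ℝ)+2) s * poch (-(D:ℝ)) s * (s.factorial : ℝ) * ((-((j:ℝ)))*(((j:ℝ))+1)*((1+((s:ℝ)))*((((D:ℝ))+2)+((s:ℝ)))*(-((D:ℝ))+((s:ℝ)))*(((s:ℝ))+1))*(((D:ℝ))*(((D:ℝ))+2))^2*(2*((j:ℝ))+1))))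 * (3*((j:ℝ))*(((D:ℝ))+1+((j:ℝ)))*(((D:ℝ))+1-((j:ℝ)))*(((D:ℝ))*(((D:ℝ))+2))*(((j:ℝ))+1)*((j:ℝ))*(-((j:ℝ))+((s:ℝ)))*(-((j:ℝ))+((s:ℝ))+1)) := by
      rw [cc, trm, hcast]
      have r1 : (-(((j:ℝ)) - 1)) = -(j:ℝ)+1 := by ring
      have r2 : ((j:ℝ) - 1 + 1) = (j:ℝ) := by ring
      rw [r1, r2, e1, e3, poch_succ (-(n:ℝ)) s, poch_succ ((n:ℝ)+1) s,
        poch_succ 1 s, poch_succ ((D:ℝ)+2) s, poch_succ (-(D:ℝ)) s, es8]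
      push_cast
      field_simp
    have hT2 : (aa D j - tht D n) * trm D j n (s+1) = ((poch (-(j:ℝ)) s * poch ((j:ℝ)+1) s * poch (-(n:ℝ)) s * poch ((n:ℝ)+1) s * (-((n:ℝ))+((s:ℝ))) * (((n:ℝ))+1+((s:ℝ)))) / (poch 1 s * poch ((D:ℝ)+2) s * poch (-(D:ℝ)) s * (s.factorial : ℝ) * ((-((j:ℝ)))*(((j:ℝ))+1)*((1+((s:ℝ)))*((((D:ℝ))+2)+((s:ℝ)))*(-((D:ℝ))+((s:ℝ)))*(((s:ℝ))+1))*(((D:ℝ))*(((D:ℝ))+2))^2*(2*((j:ℝ))+1)))) * ((3*((j:ℝ))*(((j:ℝ))+1) - 3*(((D:ℝ))*(((D:ℝ))+2)) + 6*((n:ℝ))*(((n:ℝ))+1))*(-((j:ℝ))+((s:ℝ)))*(((j:ℝ))+1+((s:ℝ)))*(-((j:ℝ)))*(((j:ℝ))+1)*(((D:ℝ))*(((D:ℝ))+2))*(2*((j:ℝ))+1)) := by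
      rw [aa, tht, trm, poch_succ (-(j:ℝ)) s, poch_succ ((j:ℝ)+1) s,
        poch_succ (-(n:ℝ)) s, poch_succ ((n:ℝ)+1) s, poch_succ 1 s,
        poch_succ ((D:ℝ)+2) s, poch_succ (-(D:ℝ)) s, es8]
      push_cast
      field_simp
      ring
    have hT3 : bb D j * trm D (j+1) n (s+1) = ((poch (-(j:ℝ)) s * poch ((j:ℝ)+1) s * poch (-(n:ℝ)) s * poch ((n:ℝ)+1) s * (-((n:ℝ))+((s:ℝ))) * (((n:ℝ))+1+((s:ℝ)))) / (poch 1 s * poch ((D:ℝ)+2) s * poch (-(D:ℝ)) s * (s.factorial : ℝ) * ((-((j:ℝ)))*(((j:ℝ))+1)*((1+((s:ℝ)))*((((D:ℝ))+2)+((s:ℝ)))*(-((D:ℝ))+((s:ℝ)))*(((s:ℝ))+1))*(((D:ℝ))*(((D:ℝ))+2))^2*(2*((j:ℝ))+1)))) * (3*(((j:ℝ))+1)*(((D:ℝ))+2+((j:ℝ)))*(((D:ℝ))-((j:ℝ)))*(-((j:ℝ))-1)*(((j:ℝ))+1+((s:ℝ)))*(((j:ℝ))+2+((s:ℝ)))*(-((j:ℝ)))*(((D:ℝ))*(((D:ℝ))+2)))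 := by
      rw [bb, trm]
      have r3 : (-(((j+1 : ℕ)) : ℝ)) = -(j:ℝ)-1 := by push_cast; ring
      have r4 : ((((j+1 : ℕ)) : ℝ)+1) = (j:ℝ)+2 := by push_cast; ring
      rw [r3, r4, e4, e2, poch_succ (-(n:ℝ)) s, poch_succ ((n:ℝ)+1) s,
        poch_succ 1 s, poch_succ ((D:ℝ)+2) s, poch_succ (-(D:ℝ)) s, es8]
      push_cast
      field_simp
    have hG1 : gg D j n (s+1+1) = ((poch (-(j:ℝ)) s * poch ((j:ℝ)+1) s * poch (-(n:ℝ)) s * poch ((n:ℝ)+1) s * (-((n:ℝ))+((s:ℝ))) * (((n:ℝ))+1+((s:ℝ)))) / (poch 1 s * poch ((D:ℝ)+2) s * poch (-(D:ℝ)) s * (s.factorial : ℝ) * ((-((j:ℝ)))*(((j:ℝ))+1)*((1+((s:ℝ)))*((((D:ℝ))+2)+((s:ℝ)))*(-((D:ℝ))+((s:ℝ)))*(((s:ℝ))+1))*(((D:ℝ))*(((D:ℝ))+2))^2*(2*((j:ℝ))+1)))) * ((-6)*(-((j:ℝ))+((s:ℝ)))*(((j:ℝ))+1+((s:ℝ)))*(-((n:ℝ))+((s:ℝ))+1)*(((n:ℝ))+2+((s:ℝ)))*(-((j:ℝ)))*(((j:ℝ))+1)*(((D:ℝ))*(((D:ℝ))+2))*(2*((j:ℝ))+1))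 := by
      show gg D j n (s+2) = _
      rw [gg, poch_succ (-(j:ℝ)) s, poch_succ ((j:ℝ)+1) s,
        poch_succ (-(n:ℝ)) (s+1), poch_succ ((n:ℝ)+1) (s+1),
        poch_succ (-(n:ℝ)) s, poch_succ ((n:ℝ)+1) s,
        poch_succ 1 s, poch_succ ((D:ℝ)+2) s, poch_succ (-(D:ℝ)) s, es8]
      push_cast
      field_simp
      ring
    have hG2 : gg D j n (s+1) = ((poch (-(j:ℝ)) s * poch ((j:ℝ)+1) s * poch (-(n:ℝ)) s * poch ((n:ℝ)+1) s * (-((n:ℝ))+((s:ℝ))) * (((n:ℝ))+1+((s:ℝ)))) / (poch 1 s * poch ((D:ℝ)+2) s * poch (-(D:ℝ)) s * (s.factorial : ℝ) * ((-((j:ℝ)))*(((j:ℝ))+1)*((1+((s:ℝ)))*((((D:ℝ))+2)+((s:ℝ)))*(-((D:ℝ))+((s:ℝ)))*(((s:ℝ))+1))*(((D:ℝ))*(((D:ℝ))+2))^2*(2*((j:ℝ))+1)))) * ((-6)*(-((j:ℝ)))*(((j:ℝ))+1)*((1+((s:ℝ)))*((((D:ℝ))+2)+((s:ℝ)))*(-((D:ℝ))+((s:ℝ)))*(((s:ℝ))+1))*(((D:ℝ))*(((D:ℝ))+2))*(2*((j:ℝ))+1))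 := by
      rw [gg, poch_succ (-(n:ℝ)) s, poch_succ ((n:ℝ)+1) s]
      push_cast
      field_simp
    rw [hT1, hT2, hT3, hG1, hG2]
    linear_combination ((poch (-(j:ℝ)) s * poch ((j:ℝ)+1) s * poch (-(n:ℝ)) s * poch ((n:ℝ)+1) s * (-((n:ℝ))+((s:ℝ))) * (((n:ℝ))+1+((s:ℝ)))) / (poch 1 s * poch ((D:ℝ)+2) s * poch (-(D:ℝ)) s * (s.factorial : ℝ) * ((-((j:ℝ)))*(((j:ℝ))+1)*((1+((s:ℝ)))*((((D:ℝ))+2)+((s:ℝ)))*(-((D:ℝ))+((s:ℝ)))*(((s:ℝ))+1))*(((D:ℝ))*(((D:ℝ))+2))^2*(2*((j:ℝ))+1)))) * scalar_id D j n s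

lemma F4_eq_sum (D i n : ℕ) (hi : i ≤ D+1) (hn : n ≤ D) :
    F4 D i n = ∑ t ∈ Finset.range (D+1), trm D i n t := by
  rw [F4]
  apply Finset.sum_subset
  · intro t ht
    simp only [Finset.mem_range] at *
    omega
  · intro t htD htmin
    simp only [Finset.mem_range, not_lt] at htD htmin
    rcases Nat.lt_or_ge i n with h | h
    · have : i < t := by omega
      show trm D i n t = 0
      rw [trm, poch_neg_nat_eq_zero i t this]
      simp
    · have : n < t := by omega
      show trm D i n t = 0
      rw [trm, poch_neg_nat_eq_zero n t this]
      simp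

lemma F4_symm (D i j : ℕ) : F4 D i j = F4 D j i := by
  rw [F4, F4, Nat.min_comm]
  exact Finset.sum_congr rfl fun t _ => by ring

lemma F4_left_zero (D n : ℕ) : F4 D 0 n = 1 := by
  simp [F4, poch_zero]

lemma F4_right_zero (D n : ℕ) : F4 D n 0 = 1 := by
  rw [F4_symm]; exact F4_left_zero D n

lemma gg_top (D j n : ℕ) (hn : n ≤ D) : gg D j n (D+1) = 0 := by
  show gg D j n (D+1) = 0
  rw [gg, poch_neg_nat_eq_zero n (D+1) (by omega)]
  simp

lemma cc_zero (D : ℕ) : cc D 0 = 0 := by simp [cc]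

lemma aa_zero (D : ℕ) : aa D 0 = 0 := by simp [aa]

lemma bb_top (D : ℕ) : bb D D = 0 := by simp [bb]

lemma recur (D : ℕ) (hD : 0 < D) (j n : ℕ) (hj : j ≤ D) (hn : n ≤ D) :
    tht D n * F4 D j n
      = cc D j * F4 D (j-1) n + aa D j * F4 D j n + bb D j * F4 D (j+1) n := by
  have hDR : (0:ℝ) < (D:ℝ) := by exact_mod_cast hD
  have hDne : (D:ℝ) ≠ 0 := ne_of_gt hDR
  have hD2 : (D:ℝ) + 2 ≠ 0 := by linarith
  rcases Nat.eq_zero_or_pos j with hj0 | hj1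
  · subst hj0
    rw [cc_zero, aa_zero, F4_left_zero]
    rcases Nat.eq_zero_or_pos n with hn0 | hn1
    · subst hn0
      rw [F4_right_zero]
      rw [tht, bb]
      push_cast
      field_simp
      ring
    · have hF1 : F4 D 1 n = 1 - 2*(n:ℝ)*((n:ℝ)+1)/((D:ℝ)*((D:ℝ)+2)) := by
        have hmin : min 1 n = 1 := by omega
        rw [F4, hmin]
        rw [Finset.sum_range_succ, Finset.sum_range_one]
        simp only [poch_succ, poch_zero, Nat.factorial_one, Nat.factorial_zero]
        push_cast
        field_simp
        ring_nf
        field_simp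
        ring
      rw [hF1, tht, bb]
      push_cast
      field_simp
      ring
  · have h1 : F4 D (j-1) n = ∑ t ∈ Finset.range (D+1), trm D (j-1) n t :=
      F4_eq_sum D (j-1) n (by omega) hn
    have h2 : F4 D j n = ∑ t ∈ Finset.range (D+1), trm D j n t :=
      F4_eq_sum D j n (by omega) hn
    have h3 : F4 D (j+1) n = ∑ t ∈ Finset.range (D+1), trm D (j+1) n t :=
      F4_eq_sum D (j+1) n (by omega) hn
    have key : ∑ t ∈ Finset.range (D+1),
        (cc D j * trm D (j-1) n t + (aa D j - tht D n) * trm D j n t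
          + bb D j * trm D (j+1) n t) = 0 := by
      have := Finset.sum_congr rfl
        (fun t (ht : t ∈ Finset.range (D+1)) =>
          summand D j n hD hj1 hj hn t (by simpa [Nat.lt_succ_iff] using ht))
      rw [this, Finset.sum_range_sub (gg D j n), gg_top D j n hn]
      simp [gg]
    rw [Finset.sum_add_distrib, Finset.sum_add_distrib, ← Finset.mul_sum,
      ← Finset.mul_sum, ← Finset.mul_sum, ← h1, ← h2, ← h3] at key
    linear_combination -key

lemma kcb (D i : ℕ) (hD : 0 < D) :
    (2*((i:ℝ)+1)+1) * cc D (i+1) = (2*(i:ℝ)+1) * bb D i := by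
  have hDR : (0:ℝ) < (D:ℝ) := by exact_mod_cast hD
  have hDne : (D:ℝ) ≠ 0 := ne_of_gt hDR
  have hD2 : (D:ℝ) + 2 ≠ 0 := by linarith
  rw [cc, bb]
  push_cast
  have h1 : 2*(i:ℝ)+1 ≠ 0 := by positivity
  have h2 : 2*(i:ℝ)+3 ≠ 0 := by positivity
  field_simp
  ring

lemma shift (D : ℕ) (hD : 0 < D) (a b : ℕ) :
    ∑ j ∈ Finset.range (D+1), (2*(j:ℝ)+1) * cc D j * F4 D (j-1) a * F4 D j b
      = ∑ j ∈ Finset.range (D+1), (2*(j:ℝ)+1) * bb D j * F4 D j a * F4 D (j+1) b := by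
  rw [Finset.sum_range_succ' _ D, Finset.sum_range_succ _ D]
  rw [cc_zero, bb_top]
  simp only [Nat.cast_zero, mul_zero, zero_mul, mul_zero, add_zero]
  apply Finset.sum_congr rfl
  intro i _
  have h := kcb D i hD
  have hc : ((i+1 : ℕ) : ℝ) = (i:ℝ)+1 := by push_cast; ring
  rw [Nat.add_sub_cancel, hc]
  linear_combination (F4 D i a * F4 D (i+1) b) * h

lemma symW (D : ℕ) (hD : 0 < D) (a b : ℕ) (ha : a ≤ D) (hb : b ≤ D) :
    tht D a * ∑ j ∈ Finset.range (D+1), (2*(j:ℝ)+1) * F4 D j a * F4 D j b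
      = (∑ j ∈ Finset.range (D+1), (2*(j:ℝ)+1) * bb D j * F4 D j a * F4 D (j+1) b)
        + (∑ j ∈ Finset.range (D+1), (2*(j:ℝ)+1) * aa D j * F4 D j a * F4 D j b)
        + (∑ j ∈ Finset.range (D+1), (2*(j:ℝ)+1) * bb D j * F4 D (j+1) a * F4 D j b) := by
  rw [Finset.mul_sum]
  have step : ∀ j ∈ Finset.range (D+1),
      tht D a * ((2*(j:ℝ)+1) * F4 D j a * F4 D j b)
        = (2*(j:ℝ)+1) * cc D j * F4 D (j-1) a * F4 D j b
          + (2*(j:ℝ)+1) * aa D j * F4 D j a * F4 D j b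
          + (2*(j:ℝ)+1) * bb D j * F4 D (j+1) a * F4 D j b := by
    intro j hj
    have hjD : j ≤ D := by simpa [Nat.lt_succ_iff] using hj
    have h := recur D hD j a hjD ha
    linear_combination ((2*(j:ℝ)+1) * F4 D j b) * h
  rw [Finset.sum_congr rfl step]
  rw [Finset.sum_add_distrib, Finset.sum_add_distrib, shift D hD a b]
  try ring

lemma tht_inj (D n m : ℕ) (hD : 0 < D) (hnm : n ≠ m) : tht D n ≠ tht D m := by
  have hDR : (0:ℝ) < (D:ℝ) := by exact_mod_cast hD
  have hDne : (D:ℝ) ≠ 0 := ne_of_gt hDR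
  have hD2 : (D:ℝ) + 2 ≠ 0 := by linarith
  intro h
  rw [tht, tht] at h
  have h2 : (n:ℝ)*((n:ℝ)+1) = (m:ℝ)*((m:ℝ)+1) := by
    field_simp at h
    linarith
  have : n*(n+1) = m*(m+1) := by exact_mod_cast h2
  rcases Nat.lt_or_ge n m with hl | hl
  · nlinarith
  · have : m < n := by omega
    nlinarith

lemma offdiag (D : ℕ) (hD : 0 < D) (n m : ℕ) (hn : n ≤ D) (hm : m ≤ D) (hnm : n ≠ m) :
    ∑ j ∈ Finset.range (D+1), (2*(j:ℝ)+1) * F4 D j n * F4 D j m = 0 := by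
  have h1 := symW D hD n m hn hm
  have h2 := symW D hD m n hm hn
  have hWsym : ∑ j ∈ Finset.range (D+1), (2*(j:ℝ)+1) * F4 D j m * F4 D j n
      = ∑ j ∈ Finset.range (D+1), (2*(j:ℝ)+1) * F4 D j n * F4 D j m :=
    Finset.sum_congr rfl fun j _ => by ring
  have hS1 : ∑ j ∈ Finset.range (D+1), (2*(j:ℝ)+1) * bb D j * F4 D j m * F4 D (j+1) n
      = ∑ j ∈ Finset.range (D+1), (2*(j:ℝ)+1) * bb D j * F4 D (j+1) n * F4 D j m :=
    Finset.sum_congr rfl fun j _ => by ring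
  have hS2 : ∑ j ∈ Finset.range (D+1), (2*(j:ℝ)+1) * aa D j * F4 D j m * F4 D j n
      = ∑ j ∈ Finset.range (D+1), (2*(j:ℝ)+1) * aa D j * F4 D j n * F4 D j m :=
    Finset.sum_congr rfl fun j _ => by ring
  have hS3 : ∑ j ∈ Finset.range (D+1), (2*(j:ℝ)+1) * bb D j * F4 D (j+1) m * F4 D j n
      = ∑ j ∈ Finset.range (D+1), (2*(j:ℝ)+1) * bb D j * F4 D j n * F4 D (j+1) m :=
    Finset.sum_congr rfl fun j _ => by ring
  rw [hWsym, hS1, hS2, hS3] at h2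
  have key : (tht D n - tht D m) *
      ∑ j ∈ Finset.range (D+1), (2*(j:ℝ)+1) * F4 D j n * F4 D j m = 0 := by
    linear_combination h1 - h2
  rcases mul_eq_zero.1 key with h | h
  · exact absurd (by linarith : tht D n = tht D m) (tht_inj D n m hD hnm)
  · exact h

lemma symS (D : ℕ) (hD : 0 < D) (a b : ℕ) (ha : a ≤ D) (hb : b ≤ D) :
    ∑ j ∈ Finset.range (D+1), (2*(j:ℝ)+1) * tht D j * F4 D j a * F4 D j b
      = cc D a * ∑ j ∈ Finset.range (D+1), (2*(j:ℝ)+1) * F4 D j (a-1) * F4 D j b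
        + aa D a * ∑ j ∈ Finset.range (D+1), (2*(j:ℝ)+1) * F4 D j a * F4 D j b
        + bb D a * ∑ j ∈ Finset.range (D+1), (2*(j:ℝ)+1) * F4 D j (a+1) * F4 D j b := by
  rw [Finset.mul_sum, Finset.mul_sum, Finset.mul_sum, ← Finset.sum_add_distrib,
    ← Finset.sum_add_distrib]
  apply Finset.sum_congr rfl
  intro j hj
  have hjD : j ≤ D := by simpa [Nat.lt_succ_iff] using hj
  have h := recur D hD a j ha hjD
  rw [F4_symm D a j, F4_symm D (a-1) j, F4_symm D (a+1) j] at h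
  linear_combination ((2*(j:ℝ)+1) * F4 D j b) * h

lemma bb_pos (D n : ℕ) (hD : 0 < D) (hn : n < D) : 0 < bb D n := by
  have hDR : (0:ℝ) < (D:ℝ) := by exact_mod_cast hD
  have hnD : (n:ℝ) < (D:ℝ) := by exact_mod_cast hn
  rw [bb]
  have h1 : (0:ℝ) < (D:ℝ) - n := by linarith
  have h2 : (0:ℝ) < (D:ℝ) + 2 + n := by positivity
  positivity

lemma sum_odd (N : ℕ) : ∑ j ∈ Finset.range N, (2*(j:ℝ)+1) = (N:ℝ)^2 := by
  induction N with
  | zero => simp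
  | succ M ih =>
      rw [Finset.sum_range_succ, ih]
      push_cast
      ring

lemma diag_step (D : ℕ) (hD : 0 < D) (n : ℕ) (hn : n + 1 ≤ D) :
    (2*((n:ℝ)+1)+1) * ∑ j ∈ Finset.range (D+1), (2*(j:ℝ)+1) * F4 D j (n+1) * F4 D j (n+1)
      = (2*(n:ℝ)+1) * ∑ j ∈ Finset.range (D+1), (2*(j:ℝ)+1) * F4 D j n * F4 D j n := by
  have hA := symS D hD n (n+1) (by omega) hn
  have hB := symS D hD (n+1) n hn (by omega)
  have hsym : ∑ j ∈ Finset.range (D+1), (2*(j:ℝ)+1) * F4 D j (n+1) * F4 D j n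
      = ∑ j ∈ Finset.range (D+1), (2*(j:ℝ)+1) * tht D j * F4 D j n * F4 D j (n+1)
        - ∑ j ∈ Finset.range (D+1), (2*(j:ℝ)+1) * tht D j * F4 D j (n+1) * F4 D j n
        + ∑ j ∈ Finset.range (D+1), (2*(j:ℝ)+1) * F4 D j (n+1) * F4 D j n := by
    have : ∑ j ∈ Finset.range (D+1), (2*(j:ℝ)+1) * tht D j * F4 D j n * F4 D j (n+1)
        = ∑ j ∈ Finset.range (D+1), (2*(j:ℝ)+1) * tht D j * F4 D j (n+1) * F4 D j n :=
      Finset.sum_congr rfl fun j _ => by ring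
    rw [this]; ring
  -- vanishing off-diagonal sums
  have hz1 : ∑ j ∈ Finset.range (D+1), (2*(j:ℝ)+1) * F4 D j (n-1) * F4 D j (n+1) = 0 :=
    offdiag D hD (n-1) (n+1) (by omega) hn (by omega)
  have hz2 : ∑ j ∈ Finset.range (D+1), (2*(j:ℝ)+1) * F4 D j n * F4 D j (n+1) = 0 :=
    offdiag D hD n (n+1) (by omega) hn (by omega)
  have hz3 : ∑ j ∈ Finset.range (D+1), (2*(j:ℝ)+1) * F4 D j (n+1) * F4 D j n = 0 :=
    offdiag D hD (n+1) n hn (by omega) (by omega)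
  have hz4 : bb D (n+1) *
      ∑ j ∈ Finset.range (D+1), (2*(j:ℝ)+1) * F4 D j (n+1+1) * F4 D j n = 0 := by
    rcases Nat.lt_or_ge (n+1) D with h | h
    · rw [offdiag D hD (n+2) n (by omega) (by omega) (by omega), mul_zero]
    · have : n + 1 = D := by omega
      rw [this, bb_top, zero_mul]
  have hnn : n + 1 - 1 = n := by omega
  rw [hz1, hz2] at hA
  rw [hnn, hz3] at hB
  -- hA : S = 0 + 0 + bb n * d(n+1)  (S := sum tht j F4 j n F4 j (n+1))
  -- hB : S' = cc (n+1) * d n + aa (n+1) * 0 + bb (n+1) * W(n+2) n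
  have hSS : ∑ j ∈ Finset.range (D+1), (2*(j:ℝ)+1) * tht D j * F4 D j n * F4 D j (n+1)
      = ∑ j ∈ Finset.range (D+1), (2*(j:ℝ)+1) * tht D j * F4 D j (n+1) * F4 D j n :=
    Finset.sum_congr rfl fun j _ => by ring
  have hkey : bb D n * ∑ j ∈ Finset.range (D+1), (2*(j:ℝ)+1) * F4 D j (n+1) * F4 D j (n+1)
      = cc D (n+1) * ∑ j ∈ Finset.range (D+1), (2*(j:ℝ)+1) * F4 D j n * F4 D j n := by
    have := hA
    rw [hSS] at this
    rw [this] at hB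
    linear_combination hB + hz4
  have hk := kcb D n hD
  have hbne : bb D n ≠ 0 := ne_of_gt (bb_pos D n hD (by omega))
  have expand : bb D n * ((2*((n:ℝ)+1)+1) *
        ∑ j ∈ Finset.range (D+1), (2*(j:ℝ)+1) * F4 D j (n+1) * F4 D j (n+1))
      = bb D n * ((2*(n:ℝ)+1) *
        ∑ j ∈ Finset.range (D+1), (2*(j:ℝ)+1) * F4 D j n * F4 D j n) := by
    linear_combination (2*((n:ℝ)+1)+1) * hkey
      + (∑ j ∈ Finset.range (D+1), (2*(j:ℝ)+1) * F4 D j n * F4 D j n) * hk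
  exact mul_left_cancel₀ hbne expand

lemma diag (D : ℕ) (hD : 0 < D) (n : ℕ) (hn : n ≤ D) :
    (2*(n:ℝ)+1) * ∑ j ∈ Finset.range (D+1), (2*(j:ℝ)+1) * F4 D j n * F4 D j n
      = ((D:ℝ)+1)^2 := by
  induction n with
  | zero =>
      have : ∀ j ∈ Finset.range (D+1), (2*(j:ℝ)+1) * F4 D j 0 * F4 D j 0 = 2*(j:ℝ)+1 := by
        intro j _
        rw [F4_right_zero]
        ring
      rw [Finset.sum_congr rfl this, sum_odd (D+1)]
      push_cast
      ring
  | succ m ih =>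
      have hm : m ≤ D := by omega
      have h := diag_step D hD m (by omega)
      have hc : ((m+1 : ℕ) : ℝ) = (m:ℝ)+1 := by push_cast; ring
      rw [hc, h]
      exact ih hm

theorem dual_orthogonality (D : ℕ) (hD : 0 < D) (n m : ℕ) (hn : n ≤ D) (hm : m ≤ D) :
    ∑ j ∈ Finset.range (D + 1), (2 * (j : ℝ) + 1) * F4 D j n * F4 D j m
      = ((D : ℝ) + 1) ^ 2 * (2 * (n : ℝ) + 1)⁻¹ * (if n = m then 1 else 0) := by
  rcases eq_or_ne n m with h | h
  · subst h
    rw [if_pos rfl, mul_one]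
    have hd := diag D hD n hn
    have h2n : 2*(n:ℝ)+1 ≠ 0 := by positivity
    rw [eq_mul_inv_iff_mul_eq₀ h2n]
    linarith
  · rw [if_neg h, mul_zero]
    exact offdiag D hD n m hn hm h
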